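/- For any Z = (z_1,…,z_ℓ) ∈ 𝒳^ℓ and any s ≤ ℓ, one has the exact identity (1/ℓ) ∑_{i=1}^ℓ (k(z_i,z_i) − k_s^Z(z_i,z_i)) = (1/ℓ) ∑_{i=s+1}^ℓ λ_i, where λ_1 ≥ ⋯ ≥ λ_ℓ are the eigenvalues of the Gram matrix k(Z,Z); consequently, by Cauchy–Schwarz, ((1/ℓ) ∑_{i=1}^ℓ √(k(z_i,z_i) − k_s^Z(z_i,z_i)))² ≤ (1/ℓ) ∑_{i=s+1}^ℓ λ_i. -/

import Mathlib

open scoped RealInnerProductSpace BigOperators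
open Matrix MeasureTheory

/-- `B` is the Moore–Penrose pseudo-inverse of `A`. -/
def IsMoorePenrose {m n : Type*} [Fintype m] [Fintype n]
    (A : Matrix m n ℝ) (B : Matrix n m ℝ) : Prop :=
  A * B * A = A ∧ B * A * B = B ∧ (A * B)ᵀ = A * B ∧ (B * A)ᵀ = B * A

lemma mp_unique {n : Type*} [Fintype n] (A B C : Matrix n n ℝ)
    (hB : IsMoorePenrose A B) (hC : IsMoorePenrose A C) : B = C := by
  obtain ⟨hB1, hB2, hB3, hB4⟩ := hB
  obtain ⟨hC1, hC2, hC3, hC4⟩ := hC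
  have hBA : B * A = C * A := by
    calc B * A = (B * A)ᵀ := hB4.symm
      _ = (B * (A * C * A))ᵀ := by rw [hC1]
      _ = ((B * A) * (C * A))ᵀ := by simp only [Matrix.mul_assoc]
      _ = (C * A)ᵀ * (B * A)ᵀ := by rw [Matrix.transpose_mul]
      _ = (C * A) * (B * A) := by rw [hB4, hC4]
      _ = C * (A * B * A) := by simp only [Matrix.mul_assoc]
      _ = C * A := by rw [hB1]
  have hAB : A * B = A * C := by
    calc A * B = (A * B)ᵀ := hB3.symm
      _ = ((A * C * A) * B)ᵀ := by rw [hC1]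
      _ = ((A * C) * (A * B))ᵀ := by simp only [Matrix.mul_assoc]
      _ = (A * B)ᵀ * (A * C)ᵀ := by rw [Matrix.transpose_mul]
      _ = (A * B) * (A * C) := by rw [hB3, hC3]
      _ = (A * B * A) * C := by simp only [Matrix.mul_assoc]
      _ = A * C := by rw [hB1]
  calc B = B * A * B := hB2.symm
    _ = B * (A * B) := by rw [Matrix.mul_assoc]
    _ = B * (A * C) := by rw [hAB]
    _ = (B * A) * C := by rw [Matrix.mul_assoc]
    _ = (C * A) * C := by rw [hBA]
    _ = C := hC2

/-- `(1/ℓ) ∑_i (k(z_i,z_i) − k_s^Z(z_i,z_i)) = (1/ℓ) ∑_{i=s+1}^ℓ λ_i`,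
and by Cauchy–Schwarz
`((1/ℓ) ∑_i √(k(z_i,z_i) − k_s^Z(z_i,z_i)))² ≤ (1/ℓ) ∑_{i=s+1}^ℓ λ_i`. -/
theorem stmt1
    {𝒳 : Type*} [MeasurableSpace 𝒳]
    {H : Type*} [NormedAddCommGroup H] [InnerProductSpace ℝ H]
    (φ : 𝒳 → H)
    (k : 𝒳 → 𝒳 → ℝ) (hk : ∀ x y, k x y = ⟪φ x, φ y⟫)
    (ℓ s : ℕ) (hs : s ≤ ℓ) (Z : Fin ℓ → 𝒳)
    (G : Matrix (Fin ℓ) (Fin ℓ) ℝ) (hG : ∀ a b, G a b = k (Z a) (Z b))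
    (U : Matrix (Fin ℓ) (Fin ℓ) ℝ) (lam : Fin ℓ → ℝ)
    (hU : Uᵀ * U = 1)
    (hdecomp : G = U * Matrix.diagonal lam * Uᵀ)
    (hmono : ∀ i j : Fin ℓ, i ≤ j → lam j ≤ lam i)
    (hlam0 : ∀ i, 0 ≤ lam i)
    (Bs : Matrix (Fin ℓ) (Fin ℓ) ℝ)
    (hBs : IsMoorePenrose
      (U * Matrix.diagonal (fun i : Fin ℓ => if (i : ℕ) < s then lam i else 0) * Uᵀ) Bs)
    (ksZ : 𝒳 → 𝒳 → ℝ)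
    (hksZ : ∀ x y, ksZ x y = ∑ a, ∑ b, k x (Z a) * Bs a b * k (Z b) y) :
    (1 / ℓ : ℝ) * ∑ i, (k (Z i) (Z i) - ksZ (Z i) (Z i))
      = (1 / ℓ : ℝ) * ∑ i ∈ Finset.univ.filter (fun i : Fin ℓ => s ≤ (i : ℕ)), lam i ∧
    ((1 / ℓ : ℝ) * ∑ i, Real.sqrt (k (Z i) (Z i) - ksZ (Z i) (Z i))) ^ 2
      ≤ (1 / ℓ : ℝ) * ∑ i ∈ Finset.univ.filter (fun i : Fin ℓ => s ≤ (i : ℕ)), lam i := by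
  classical
  set d : Fin ℓ → ℝ := fun i => if (i : ℕ) < s then lam i else 0 with hd
  set p : Fin ℓ → ℝ := fun i => if (i : ℕ) < s then (lam i)⁻¹ else 0 with hp
  -- sandwich multiplication
  have key : ∀ (X Y : Matrix (Fin ℓ) (Fin ℓ) ℝ),
      (U * X * Uᵀ) * (U * Y * Uᵀ) = U * (X * Y) * Uᵀ := by
    intro X Y
    calc (U * X * Uᵀ) * (U * Y * Uᵀ) = U * X * ((Uᵀ * U) * (Y * Uᵀ)) := by
          simp only [Matrix.mul_assoc]
      _ = U * (X * Y) * Uᵀ := by rw [hU, Matrix.one_mul]; simp only [Matrix.mul_assoc]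
  -- transpose of sandwich of diagonal
  have tkey : ∀ (e : Fin ℓ → ℝ),
      (U * Matrix.diagonal e * Uᵀ)ᵀ = U * Matrix.diagonal e * Uᵀ := by
    intro e
    simp [Matrix.transpose_mul, Matrix.diagonal_transpose, Matrix.mul_assoc]
  have hdpd : Matrix.diagonal d * Matrix.diagonal p * Matrix.diagonal d
      = Matrix.diagonal d := by
    rw [Matrix.diagonal_mul_diagonal, Matrix.diagonal_mul_diagonal]
    refine congrArg Matrix.diagonal (funext fun i => ?_)
    by_cases h : (i : ℕ) < s
    · simp only [hd, hp, if_pos h]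
      rcases eq_or_ne (lam i) 0 with h0 | h0
      · simp [h0]
      · field_simp
    · simp [hd, hp, h]
  have hpdp : Matrix.diagonal p * Matrix.diagonal d * Matrix.diagonal p
      = Matrix.diagonal p := by
    rw [Matrix.diagonal_mul_diagonal, Matrix.diagonal_mul_diagonal]
    refine congrArg Matrix.diagonal (funext fun i => ?_)
    by_cases h : (i : ℕ) < s
    · simp only [hd, hp, if_pos h]
      rcases eq_or_ne (lam i) 0 with h0 | h0
      · simp [h0]
      · field_simp
    · simp [hd, hp, h]
  have hMP : IsMoorePenrose (U * Matrix.diagonal d * Uᵀ) (U * Matrix.diagonal p * Uᵀ) := by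
    refine ⟨?_, ?_, ?_, ?_⟩
    · rw [key, key, hdpd]
    · rw [key, key, hpdp]
    · rw [key, Matrix.diagonal_mul_diagonal, tkey]
    · rw [key, Matrix.diagonal_mul_diagonal, tkey]
  have hBs' : Bs = U * Matrix.diagonal p * Uᵀ := mp_unique _ _ _ hBs hMP
  have hGBsG : G * Bs * G = U * Matrix.diagonal d * Uᵀ := by
    rw [hdecomp, hBs', key, key, Matrix.diagonal_mul_diagonal, Matrix.diagonal_mul_diagonal]
    have : (fun i => lam i * p i * lam i) = d := by
      funext i
      by_cases h : (i : ℕ) < s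
      · simp only [hd, hp, if_pos h]
        rcases eq_or_ne (lam i) 0 with h0 | h0
        · simp [h0]
        · field_simp
      · simp [hd, hp, h]
    rw [this]
  -- diagonal entries
  have entry : ∀ (e : Fin ℓ → ℝ) (i : Fin ℓ),
      (U * Matrix.diagonal e * Uᵀ) i i = ∑ j, e j * (U i j) ^ 2 := by
    intro e i
    rw [Matrix.mul_apply]
    refine Finset.sum_congr rfl fun j _ => ?_
    rw [Matrix.mul_diagonal, Matrix.transpose_apply]; ring
  have hcol : ∀ j, ∑ i, (U i j) ^ 2 = 1 := by
    intro j
    have h1 := congrArg (fun M : Matrix (Fin ℓ) (Fin ℓ) ℝ => M j j) hU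
    simpa [Matrix.mul_apply, Matrix.one_apply, sq] using h1
  have hks : ∀ i, ksZ (Z i) (Z i) = (G * Bs * G) i i := by
    intro i
    rw [hksZ, Matrix.mul_apply]
    simp only [Matrix.mul_apply, Finset.sum_mul]
    rw [Finset.sum_comm]
    refine Finset.sum_congr rfl fun a _ => Finset.sum_congr rfl fun b _ => ?_
    rw [hG, hG]
  have haeq : ∀ i, k (Z i) (Z i) - ksZ (Z i) (Z i)
      = ∑ j, (lam j - d j) * (U i j) ^ 2 := by
    intro i
    rw [hks, hGBsG, ← hG, hdecomp, entry, entry, ← Finset.sum_sub_distrib]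
    refine Finset.sum_congr rfl fun j _ => ?_
    ring
  have hnn : ∀ i, 0 ≤ k (Z i) (Z i) - ksZ (Z i) (Z i) := by
    intro i
    rw [haeq]
    refine Finset.sum_nonneg fun j _ => mul_nonneg ?_ (sq_nonneg _)
    by_cases h : (j : ℕ) < s
    · simp [hd, h]
    · simp [hd, h, hlam0 j]
  have hsum : ∑ i, (k (Z i) (Z i) - ksZ (Z i) (Z i))
      = ∑ i ∈ Finset.univ.filter (fun i : Fin ℓ => s ≤ (i : ℕ)), lam i := by
    calc ∑ i, (k (Z i) (Z i) - ksZ (Z i) (Z i))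
        = ∑ i, ∑ j, (lam j - d j) * (U i j) ^ 2 := by
          exact Finset.sum_congr rfl fun i _ => haeq i
      _ = ∑ j, (lam j - d j) * ∑ i, (U i j) ^ 2 := by
          rw [Finset.sum_comm]
          exact Finset.sum_congr rfl fun j _ => (Finset.mul_sum _ _ _).symm
      _ = ∑ j, (lam j - d j) := by
          refine Finset.sum_congr rfl fun j _ => ?_
          rw [hcol, mul_one]
      _ = ∑ j : Fin ℓ, (if s ≤ (j : ℕ) then lam j else 0) := by
          refine Finset.sum_congr rfl fun j _ => ?_
          by_cases h : (j : ℕ) < s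
          · simp [hd, h, Nat.not_le.mpr h]
          · simp [hd, h, Nat.le_of_not_lt h]
      _ = ∑ i ∈ Finset.univ.filter (fun i : Fin ℓ => s ≤ (i : ℕ)), lam i := by
          rw [Finset.sum_filter]
  refine ⟨by rw [hsum], ?_⟩
  rw [← hsum]
  rcases Nat.eq_zero_or_pos ℓ with h0 | hpos
  · subst h0; simp
  have hcs : (∑ i, Real.sqrt (k (Z i) (Z i) - ksZ (Z i) (Z i))) ^ 2
      ≤ (∑ i, (k (Z i) (Z i) - ksZ (Z i) (Z i))) * ℓ := by
    have := Finset.sum_mul_sq_le_sq_mul_sq Finset.univ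
      (fun i : Fin ℓ => Real.sqrt (k (Z i) (Z i) - ksZ (Z i) (Z i))) (fun _ => 1)
    simp only [mul_one, one_pow] at this
    calc (∑ i, Real.sqrt (k (Z i) (Z i) - ksZ (Z i) (Z i))) ^ 2
        ≤ (∑ i, Real.sqrt (k (Z i) (Z i) - ksZ (Z i) (Z i)) ^ 2) * ∑ _i : Fin ℓ, (1:ℝ) :=
          this
      _ = (∑ i, (k (Z i) (Z i) - ksZ (Z i) (Z i))) * ℓ := by
          rw [Finset.sum_const, Finset.card_univ, Fintype.card_fin]
          congr 1
          · exact Finset.sum_congr rfl fun i _ => Real.sq_sqrt (hnn i)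
          · simp
  have hl : (0:ℝ) < ℓ := by exact_mod_cast hpos
  rw [mul_pow]
  rw [div_pow, one_pow]
  calc (1 / (ℓ:ℝ) ^ 2) * (∑ i, Real.sqrt (k (Z i) (Z i) - ksZ (Z i) (Z i))) ^ 2
      ≤ (1 / (ℓ:ℝ) ^ 2) * ((∑ i, (k (Z i) (Z i) - ksZ (Z i) (Z i))) * ℓ) := by
        apply mul_le_mul_of_nonneg_left hcs
        positivity
    _ = (1 / ℓ : ℝ) * ∑ i, (k (Z i) (Z i) - ksZ (Z i) (Z i)) := by
        field_simp
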